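/- Let n ≥ 4 and β ∈ ℝ with β ≠ 2−n. For each 1 ≤ k ≤ n−3, the function χ_k defined on the open set U = {x ∈ ℝ^{n−1} : x_1 > 0} by χ_k(x) = ξ_k(x) · x_1^{−(k+1)(n−3+β)/(n−2+β)} (using the real power function) satisfies the partial differential equation Σ_{j=1}^{n−1} (n−1−j+β) x_j · ∂χ_k/∂x_j = 0 on U. (These are the n−3 generalized Casimir invariants of the solvable Lie algebras s_{n+1,1}(β), and, for β = 0 and β = 1 respectively, of s_{n+1,2} and s_{n+1,5}.) -/

import Mathlib

open MvPolynomial in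
/-- The polynomial invariants `ξ_k` of the coadjoint representation of `n_{n,1}`:
`ξ_0 = x 1` and, for `k ≥ 1`,
`ξ_k = ((-1)^k k/(k+1)!) x_2^{k+1} + Σ_{j=0}^{k-1} ((-1)^j/j!) x_2^j x_{k+2-j} x_1^{k-j}`. -/
noncomputable def xi (F : Type*) [Field F] : ℕ → MvPolynomial ℕ F
  | 0 => X 1
  | k + 1 =>
      C ((-1 : F) ^ (k + 1) * ((k + 1 : ℕ) : F) / (((k + 2).factorial : ℕ) : F)) *
          X 2 ^ (k + 2) +
        ∑ j ∈ Finset.range (k + 1),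
          C ((-1 : F) ^ j / ((j.factorial : ℕ) : F)) * X 2 ^ j *
            X (k + 3 - j) * X 1 ^ (k + 1 - j)

/-- The `1`-based coordinates of a point `x ∈ ℝ^{n-1}`: `coords n x i = x_i` for
`1 ≤ i ≤ n-1` and `0` otherwise. -/
noncomputable def coords (n : ℕ) (x : Fin (n - 1) → ℝ) : ℕ → ℝ :=
  fun i => if h : 1 ≤ i ∧ i ≤ n - 1 then x ⟨i - 1, by omega⟩ else 0

/-- The `j`-th coordinate unit vector of `ℝ^{n-1}` (`1`-based). -/
noncomputable def unitv (n : ℕ) (j : ℕ) : Fin (n - 1) → ℝ :=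
  fun i => if i.val + 1 = j then 1 else 0

/-- The generalized Casimir invariants `χ_k = ξ_k · x_1^{-(k+1)(n-3+β)/(n-2+β)}`
of the solvable Lie algebras `s_{n+1,1}(β)` (and, for `β = 0`, `β = 1`, of
`s_{n+1,2}` and `s_{n+1,5}`), defined on `{x : x_1 > 0}` via the real power. -/
noncomputable def chiS1 (n : ℕ) (β : ℝ) (k : ℕ) (x : Fin (n - 1) → ℝ) : ℝ :=
  MvPolynomial.eval (coords n x) (xi ℝ k) *
    (coords n x 1) ^
      (-(((k + 1 : ℕ) : ℝ) * ((n : ℝ) - 3 + β) / ((n : ℝ) - 2 + β)))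

namespace ChiAux

open MvPolynomial

/-- The evaluation of the `i`-th 1-based coordinate, as a continuous linear map. -/
noncomputable def clm (n : ℕ) (i : ℕ) : (Fin (n - 1) → ℝ) →L[ℝ] ℝ :=
  LinearMap.toContinuousLinearMap
    { toFun := fun v => coords n v i
      map_add' := by
        intro v w
        unfold coords
        by_cases h : 1 ≤ i ∧ i ≤ n - 1 <;> simp [h]
      map_smul' := by
        intro c v
        unfold coords
        by_cases h : 1 ≤ i ∧ i ≤ n - 1 <;> simp [h] }

@[simp] lemma clm_apply (n i : ℕ) (v : Fin (n - 1) → ℝ) : clm n i v = coords n v i := rfl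

lemma clm_eq_zero {n i : ℕ} (h : ¬(1 ≤ i ∧ i ≤ n - 1)) : clm n i = 0 := by
  ext v
  simp [clm_apply, coords, h]

/-- The total derivative of `y ↦ eval (coords n y) p` at `x`. -/
noncomputable def Lmap (n : ℕ) (p : MvPolynomial ℕ ℝ) (x : Fin (n - 1) → ℝ) :
    (Fin (n - 1) → ℝ) →L[ℝ] ℝ :=
  ∑ i ∈ Finset.Icc 1 (n - 1), eval (coords n x) (pderiv i p) • clm n i

lemma hasFDerivAt_eval (n : ℕ) (p : MvPolynomial ℕ ℝ) (x : Fin (n - 1) → ℝ) :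
    HasFDerivAt (fun y => eval (coords n y) p) (Lmap n p x) x := by
  induction p using MvPolynomial.induction_on with
  | C a =>
      have h0 : Lmap n (C a) x = 0 := by simp [Lmap, pderiv_C]
      rw [h0]
      simp only [eval_C]
      exact hasFDerivAt_const a x
  | add p q hp hq =>
      have h0 : Lmap n (p + q) x = Lmap n p x + Lmap n q x := by
        simp [Lmap, add_smul, Finset.sum_add_distrib]
      rw [h0]
      simp only [map_add]
      exact hp.add hq
  | mul_X p i hp =>
      classical
      have h1 : HasFDerivAt (fun y => coords n y i) (clm n i) x := (clm n i).hasFDerivAt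
      have h3 : Lmap n (p * X i) x
          = eval (coords n x) p • clm n i + coords n x i • Lmap n p x := by
        rw [add_comm]
        simp only [Lmap, pderiv_mul, map_add, map_mul, eval_X, add_smul,
          Finset.sum_add_distrib]
        congr 1
        · rw [Finset.smul_sum]
          refine Finset.sum_congr rfl fun l _ => ?_
          rw [mul_comm, mul_smul]
        · by_cases hi : i ∈ Finset.Icc 1 (n - 1)
          · rw [Finset.sum_eq_single i]
            · simp [pderiv_X_self]
            · intro l _ hne
              simp [pderiv_X, Pi.single_apply, Ne.symm hne]
            · intro h; exact absurd hi h
          · have h0 : clm n i = 0 :=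
              clm_eq_zero (fun h => hi (Finset.mem_Icc.mpr h))
            rw [h0, smul_zero]
            refine Finset.sum_eq_zero fun l hl => ?_
            have hne : l ≠ i := fun h => hi (h ▸ hl)
            simp [pderiv_X, Pi.single_apply, hne]
      rw [h3]
      simp only [map_mul, eval_X]
      exact hp.mul h1

/-- The weighted Euler (dilation) operator evaluated at `coords n x`. -/
noncomputable def S (n : ℕ) (β : ℝ) (x : Fin (n - 1) → ℝ) (p : MvPolynomial ℕ ℝ) : ℝ :=
  ∑ l ∈ Finset.Icc 1 (n - 1),
    (((n - 1 - l : ℕ) : ℝ) + β) * coords n x l * eval (coords n x) (pderiv l p)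

variable {n : ℕ} {β : ℝ} {x : Fin (n - 1) → ℝ}

lemma S_add (p q : MvPolynomial ℕ ℝ) :
    S n β x (p + q) = S n β x p + S n β x q := by
  simp [S, map_add, mul_add, Finset.sum_add_distrib]

lemma S_mul (p q : MvPolynomial ℕ ℝ) :
    S n β x (p * q)
      = S n β x p * eval (coords n x) q + eval (coords n x) p * S n β x q := by
  simp only [S, pderiv_mul, map_add, map_mul, mul_add, Finset.sum_add_distrib,
    Finset.sum_mul, Finset.mul_sum]
  congr 1 <;> exact Finset.sum_congr rfl fun l _ => by ring

lemma S_C (a : ℝ) : S n β x (C a) = 0 := by simp [S, pderiv_C]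

lemma S_X {i : ℕ} (h1 : 1 ≤ i) (h2 : i ≤ n - 1) :
    S n β x (X i) = (((n - 1 - i : ℕ) : ℝ) + β) * coords n x i := by
  classical
  rw [S, Finset.sum_eq_single i]
  · simp [pderiv_X_self]
  · intro l _ hne
    simp [pderiv_X, Pi.single_apply, Ne.symm hne]
  · intro h; exact absurd (Finset.mem_Icc.mpr ⟨h1, h2⟩) h

/-- `p` is weighted-homogeneous of weighted degree `d` at the point `x`. -/
def Hdeg (n : ℕ) (β : ℝ) (x : Fin (n - 1) → ℝ) (d : ℝ) (p : MvPolynomial ℕ ℝ) : Prop :=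
  S n β x p = d * eval (coords n x) p

lemma Hdeg_congr {d e : ℝ} {p : MvPolynomial ℕ ℝ} (h : d = e) (hp : Hdeg n β x d p) :
    Hdeg n β x e p := h ▸ hp

lemma Hdeg_C0 (a : ℝ) : Hdeg n β x 0 (C a) := by simp [Hdeg, S_C]

lemma Hdeg_add' {d : ℝ} {p q : MvPolynomial ℕ ℝ} (hp : Hdeg n β x d p)
    (hq : Hdeg n β x d q) : Hdeg n β x d (p + q) := by
  unfold Hdeg at *
  rw [S_add, hp, hq, map_add]; ring

lemma Hdeg_mul {d e : ℝ} {p q : MvPolynomial ℕ ℝ} (hp : Hdeg n β x d p)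
    (hq : Hdeg n β x e q) : Hdeg n β x (d + e) (p * q) := by
  unfold Hdeg at *
  rw [S_mul, hp, hq, map_mul]; ring

lemma Hdeg_zero (d : ℝ) : Hdeg n β x d 0 := by
  simp [Hdeg, S]

lemma Hdeg_sum {d : ℝ} {ι : Type*} {s : Finset ι} {f : ι → MvPolynomial ℕ ℝ}
    (h : ∀ j ∈ s, Hdeg n β x d (f j)) : Hdeg n β x d (∑ j ∈ s, f j) := by
  classical
  induction s using Finset.induction_on with
  | empty => simpa using Hdeg_zero d
  | insert _ _ hni ih =>
      rw [Finset.sum_insert hni]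
      exact Hdeg_add' (h _ (Finset.mem_insert_self _ _))
        (ih fun j hj => h j (Finset.mem_insert_of_mem hj))

lemma Hdeg_X {i : ℕ} (h1 : 1 ≤ i) (h2 : i ≤ n - 1) :
    Hdeg n β x (((n - 1 - i : ℕ) : ℝ) + β) (X i) := by
  unfold Hdeg
  rw [S_X h1 h2, eval_X]

lemma Hdeg_pow {d : ℝ} {p : MvPolynomial ℕ ℝ} (hp : Hdeg n β x d p) (e : ℕ) :
    Hdeg n β x ((e : ℝ) * d) (p ^ e) := by
  induction e with
  | zero => simp [Hdeg, S, pderiv_one]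
  | succ e ih =>
      have := Hdeg_mul ih hp
      refine Hdeg_congr ?_ (by rw [pow_succ] at *; exact this)
      push_cast; ring

lemma Hdeg_xi (hn : 4 ≤ n) {k : ℕ} (hk1 : 1 ≤ k) (hk2 : k ≤ n - 3) :
    Hdeg n β x (((k : ℝ) + 1) * ((n : ℝ) - 3 + β)) (xi ℝ k) := by
  obtain ⟨m, rfl⟩ : ∃ m, k = m + 1 := ⟨k - 1, by omega⟩
  have hw2 : ((n - 1 - 2 : ℕ) : ℝ) = (n : ℝ) - 3 := by
    have h : n - 1 - 2 = n - 3 := by omega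
    rw [h, Nat.cast_sub (by omega)]; norm_num
  have hw1 : ((n - 1 - 1 : ℕ) : ℝ) = (n : ℝ) - 2 := by
    have h : n - 1 - 1 = n - 2 := by omega
    rw [h, Nat.cast_sub (by omega)]; norm_num
  simp only [xi]
  apply Hdeg_add'
  · refine Hdeg_congr ?_
      (Hdeg_mul (Hdeg_C0 _) (Hdeg_pow (Hdeg_X (by omega) (by omega)) (m + 2)))
    rw [hw2]; push_cast; ring
  · refine Hdeg_sum fun j hj => ?_
    rw [Finset.mem_range] at hj
    have hj' : j ≤ m := by omega
    have hx3 : ((n - 1 - (m + 3 - j) : ℕ) : ℝ) = (n : ℝ) + j - ((m : ℝ) + 4) := by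
      have h : n - 1 - (m + 3 - j) = n + j - (m + 4) := by omega
      rw [h, Nat.cast_sub (by omega)]; push_cast; ring
    have hc1 : ((m + 1 - j : ℕ) : ℝ) = (m : ℝ) + 1 - j := by
      rw [Nat.cast_sub (by omega)]; push_cast; ring
    refine Hdeg_congr ?_
      (Hdeg_mul (Hdeg_mul (Hdeg_mul (Hdeg_C0 _) (Hdeg_pow (Hdeg_X (by omega) (by omega)) j))
        (Hdeg_X (by omega) (by omega))) (Hdeg_pow (Hdeg_X (by omega) (by omega)) (m + 1 - j)))
    rw [hw2, hw1, hx3, hc1]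
    push_cast; ring

lemma coords_unitv {n i j : ℕ} (hi1 : 1 ≤ i) (hi2 : i ≤ n - 1) :
    coords n (unitv n j) i = if i = j then 1 else 0 := by
  unfold coords unitv
  rw [dif_pos ⟨hi1, hi2⟩]
  by_cases h : i = j
  · rw [if_pos (by simp; omega), if_pos h]
  · rw [if_neg (by simp; omega), if_neg h]

lemma Lmap_apply_unitv (n : ℕ) (p : MvPolynomial ℕ ℝ) (x : Fin (n - 1) → ℝ) {j : ℕ}
    (hj1 : 1 ≤ j) (hj2 : j ≤ n - 1) :
    Lmap n p x (unitv n j) = eval (coords n x) (pderiv j p) := by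
  classical
  rw [Lmap, ContinuousLinearMap.sum_apply, Finset.sum_eq_single j]
  · simp [coords_unitv hj1 hj2]
  · intro i hi hne
    rw [Finset.mem_Icc] at hi
    simp [coords_unitv hi.1 hi.2, hne]
  · intro h; exact absurd (Finset.mem_Icc.mpr ⟨hj1, hj2⟩) h

end ChiAux

open ChiAux MvPolynomial

/-- For `n ≥ 4`, `β ≠ 2 - n` and `1 ≤ k ≤ n-3`, the function
`χ_k = ξ_k · x_1^{-(k+1)(n-3+β)/(n-2+β)}` satisfies
`Σ_{j=1}^{n-1} (n-1-j+β) x_j ∂χ_k/∂x_j = 0` on `{x : x_1 > 0}`. -/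
theorem chiS1_invariant (n : ℕ) (hn : 4 ≤ n) (β : ℝ) (hβ : β ≠ 2 - (n : ℝ))
    (k : ℕ) (hk1 : 1 ≤ k) (hk2 : k ≤ n - 3)
    (x : Fin (n - 1) → ℝ) (hx : 0 < coords n x 1) :
    DifferentiableAt ℝ (chiS1 n β k) x ∧
    ∑ j ∈ Finset.Icc 1 (n - 1),
      (((n - 1 - j : ℕ) : ℝ) + β) * coords n x j *
        fderiv ℝ (chiS1 n β k) x (unitv n j) = 0 := by
  classical
  set c : ℝ := -(((k + 1 : ℕ) : ℝ) * ((n : ℝ) - 3 + β) / ((n : ℝ) - 2 + β)) with hc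
  set x1 : ℝ := coords n x 1 with hx1
  have hne : (n : ℝ) - 2 + β ≠ 0 := by
    intro h; exact hβ (by linarith)
  have hP : HasFDerivAt (fun y => eval (coords n y) (xi ℝ k)) (Lmap n (xi ℝ k) x) x :=
    hasFDerivAt_eval n (xi ℝ k) x
  have h1 : HasFDerivAt (fun y => coords n y 1) (clm n 1) x := (clm n 1).hasFDerivAt
  have hr : HasFDerivAt (fun y => coords n y 1 ^ c)
      ((c * x1 ^ (c - 1)) • clm n 1) x := h1.rpow_const (Or.inl hx.ne')
  have hχ : HasFDerivAt (chiS1 n β k)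
      (eval (coords n x) (xi ℝ k) • ((c * x1 ^ (c - 1)) • clm n 1)
        + (x1 ^ c) • Lmap n (xi ℝ k) x) x := hP.mul hr
  refine ⟨hχ.differentiableAt, ?_⟩
  rw [hχ.fderiv]
  have happ : ∀ j ∈ Finset.Icc 1 (n - 1),
      (((n - 1 - j : ℕ) : ℝ) + β) * coords n x j *
        ((eval (coords n x) (xi ℝ k) • ((c * x1 ^ (c - 1)) • clm n 1)
          + (x1 ^ c) • Lmap n (xi ℝ k) x) (unitv n j))
      = (((n - 1 - j : ℕ) : ℝ) + β) * coords n x j *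
          (eval (coords n x) (xi ℝ k) * (c * x1 ^ (c - 1)) * (if j = 1 then 1 else 0))
        + (((n - 1 - j : ℕ) : ℝ) + β) * coords n x j *
          (x1 ^ c * eval (coords n x) (pderiv j (xi ℝ k))) := by
    intro j hj
    rw [Finset.mem_Icc] at hj
    rw [ContinuousLinearMap.add_apply, ContinuousLinearMap.smul_apply,
      ContinuousLinearMap.smul_apply, ContinuousLinearMap.smul_apply,
      Lmap_apply_unitv n _ x hj.1 hj.2, clm_apply, coords_unitv (by norm_num) (by omega)]
    rw [show ((if 1 = j then (1:ℝ) else 0)) = (if j = 1 then 1 else 0) by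
      by_cases h : j = 1 <;> simp [h, eq_comm]]
    simp only [smul_eq_mul]
    ring
  rw [Finset.sum_congr rfl happ, Finset.sum_add_distrib]
  have hsum1 : ∑ j ∈ Finset.Icc 1 (n - 1),
      (((n - 1 - j : ℕ) : ℝ) + β) * coords n x j *
        (eval (coords n x) (xi ℝ k) * (c * x1 ^ (c - 1)) * (if j = 1 then 1 else 0))
      = ((n : ℝ) - 2 + β) * x1 * (eval (coords n x) (xi ℝ k) * (c * x1 ^ (c - 1))) := by
    rw [Finset.sum_eq_single 1]
    · have hw1 : ((n - 1 - 1 : ℕ) : ℝ) = (n : ℝ) - 2 := by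
        have h : n - 1 - 1 = n - 2 := by omega
        rw [h, Nat.cast_sub (by omega)]; norm_num
      simp [hw1]
      exact Or.inl (Or.inl rfl)
    · intro j _ hne'; simp [hne']
    · intro h
      exact absurd (Finset.mem_Icc.mpr ⟨le_refl 1, by omega⟩) h
  have hsum2 : ∑ j ∈ Finset.Icc 1 (n - 1),
      (((n - 1 - j : ℕ) : ℝ) + β) * coords n x j *
        (x1 ^ c * eval (coords n x) (pderiv j (xi ℝ k)))
      = x1 ^ c * S n β x (xi ℝ k) := by
    rw [S, Finset.mul_sum]
    exact Finset.sum_congr rfl fun l _ => by ring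
  rw [hsum1, hsum2, Hdeg_xi hn hk1 hk2]
  have hpow : x1 ^ c = x1 ^ (c - 1) * x1 := by
    rw [show c = (c - 1) + 1 by ring, Real.rpow_add hx, Real.rpow_one]
    ring_nf
  rw [hpow, hc]
  push_cast
  field_simp
  ring
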